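/- Let q > 5 and c₁, c₂ > 0, and let f : ℝ³ × ℝ³ → [0,∞), f = f(x,v), be continuously differentiable in x with ‖f‖_q := sup_{x,v} (1+|v|)^q f(x,v) < ∞ and ‖∇_x f‖_q := sup_{x,v} (1+|v|)^q |∇_x f(x,v)| < ∞, and suppose ρ_f(x) + |U_f(x)| + T_f(x) < c₁ and ρ_f(x), T_f(x) > c₂ for every x. Then there exists a constant C > 0, depending only on q, c₁, c₂, such that for every x, |∇_x ρ_f(x)| ≤ C ‖∇_x f‖_q, |∇_x U_f(x)| ≤ C ‖∇_x f‖_q, and |∇_x T_f(x)| ≤ C ‖∇_x f‖_q. -/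

import Mathlib

open MeasureTheory Real Filter Topology Metric RealInnerProductSpace

abbrev E3 := EuclideanSpace ℝ (Fin 3)

set_option synthInstance.maxHeartbeats 1000000
set_option maxHeartbeats 1000000

lemma clm_decomp (L : E3 →L[ℝ] ℝ) :
    L = ∑ i : Fin 3, L (EuclideanSpace.single i 1) • (EuclideanSpace.proj i : E3 →L[ℝ] ℝ) := by
  apply ContinuousLinearMap.ext; intro u
  have hu : ∑ i : Fin 3, u i • EuclideanSpace.single i (1:ℝ) = u := by
    have := (EuclideanSpace.basisFun (Fin 3) ℝ).sum_repr u
    simpa [EuclideanSpace.basisFun_apply, EuclideanSpace.basisFun_repr] using this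
  conv_lhs => rw [← hu]
  simp [map_sum, ContinuousLinearMap.sum_apply, mul_comm]

lemma meas_dir (f : E3 × E3 → ℝ) (hf : Measurable f)
    (hd : ∀ v : E3, ContDiff ℝ 1 (fun x : E3 => f (x, v))) (x₀ w : E3) :
    Measurable (fun v => fderiv ℝ (fun y : E3 => f (y, v)) x₀ w) := by
  apply measurable_of_tendsto_metrizable'
    (f := fun (n : ℕ) v => ((n : ℝ) + 1) * (f (x₀ + ((n : ℝ) + 1)⁻¹ • w, v) - f (x₀, v)))
    (u := atTop)
  · intro n
    exact (((hf.comp (measurable_prodMk_left)).sub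
      (hf.comp (measurable_prodMk_left))).const_mul _)
  · rw [tendsto_pi_nhds]
    intro v
    have hdiff : DifferentiableAt ℝ (fun y : E3 => f (y, v)) x₀ :=
      ((hd v).differentiable one_ne_zero).differentiableAt
    have hL := hdiff.hasFDerivAt
    set L := fderiv ℝ (fun y : E3 => f (y, v)) x₀
    have hline : HasDerivAt (fun t : ℝ => x₀ + t • w) w 0 := by
      simpa using ((hasDerivAt_id (0 : ℝ)).smul_const w).const_add x₀
    have hc : HasDerivAt (fun t : ℝ => f (x₀ + t • w, v)) (L w) 0 := by
      have h0 : x₀ + (0 : ℝ) • w = x₀ := by simp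
      have hL' : HasFDerivAt (fun y : E3 => f (y, v)) L (x₀ + (0 : ℝ) • w) := by
        rw [h0]; exact hL
      exact hL'.comp_hasDerivAt 0 hline
    have hs := hasDerivAt_iff_tendsto_slope.mp hc
    have hseq : Tendsto (fun n : ℕ => ((n : ℝ) + 1)⁻¹) atTop (𝓝[≠] (0 : ℝ)) := by
      apply tendsto_nhdsWithin_of_tendsto_nhds_of_eventually_within
      · simpa [one_div] using tendsto_one_div_add_atTop_nhds_zero_nat (𝕜 := ℝ)
      · filter_upwards with n
        simp only [Set.mem_compl_iff, Set.mem_singleton_iff]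
        positivity
    have := hs.comp hseq
    convert this using 2 with n
    have hne : ((n : ℝ) + 1) ≠ 0 := by positivity
    simp only [Function.comp_apply, slope_def_field]
    field_simp
    simp

lemma meas_fderiv_clm (f : E3 × E3 → ℝ) (hf : Measurable f)
    (hd : ∀ v : E3, ContDiff ℝ 1 (fun x : E3 => f (x, v))) (x₀ : E3) :
    StronglyMeasurable (fun v : E3 => fderiv ℝ (fun y : E3 => f (y, v)) x₀) := by
  have : (fun v : E3 => fderiv ℝ (fun y : E3 => f (y, v)) x₀)
      = fun v => ∑ i : Fin 3, (fderiv ℝ (fun y : E3 => f (y, v)) x₀ (EuclideanSpace.single i 1)) •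
        (EuclideanSpace.proj i : E3 →L[ℝ] ℝ) := funext fun v => clm_decomp _
  rw [this]
  exact Finset.stronglyMeasurable_fun_sum _ fun i _ =>
    ((meas_dir f hf hd x₀ _).stronglyMeasurable).smul stronglyMeasurable_const

lemma meas_fderiv_smulRight (f : E3 × E3 → ℝ) (hf : Measurable f)
    (hd : ∀ v : E3, ContDiff ℝ 1 (fun x : E3 => f (x, v))) (x₀ : E3) :
    StronglyMeasurable
      (fun v : E3 => (fderiv ℝ (fun y : E3 => f (y, v)) x₀).smulRight v) := by
  have : (fun v : E3 => (fderiv ℝ (fun y : E3 => f (y, v)) x₀).smulRight v)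
      = fun v => ∑ i : Fin 3, (fderiv ℝ (fun y : E3 => f (y, v)) x₀ (EuclideanSpace.single i 1)) •
        ((EuclideanSpace.proj i : E3 →L[ℝ] ℝ).smulRight v) := by
    funext v
    rw [clm_decomp (fderiv ℝ (fun y : E3 => f (y, v)) x₀)]
    apply ContinuousLinearMap.ext; intro u
    simp [ContinuousLinearMap.sum_apply, Finset.sum_smul, smul_smul]
  rw [this]
  refine Finset.stronglyMeasurable_fun_sum _ fun i _ =>
    ((meas_dir f hf hd x₀ _).stronglyMeasurable).smul ?_
  exact (ContinuousLinearMap.smulRightL ℝ E3 E3 (EuclideanSpace.proj i)).continuous.stronglyMeasurable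

lemma intK {r : ℝ} (hr : 3 < r) :
    Integrable (fun v : E3 => ((1 : ℝ) + ‖v‖) ^ (-r)) := by
  apply integrable_one_add_norm (μ := (volume : Measure E3))
  rw [finrank_euclideanSpace_fin]
  exact_mod_cast hr

lemma K_nonneg {r : ℝ} : 0 ≤ ∫ v : E3, ((1 : ℝ) + ‖v‖) ^ (-r) :=
  integral_nonneg fun v => by positivity

lemma weight_mul {a : ℝ} (ha : 0 < a) (k q : ℝ) : a ^ k * a ^ (-q) = a ^ (-(q - k)) := by
  rw [← rpow_add ha]; ring_nf

lemma hasFDeriv_rho (q Nd : ℝ) (hq : 3 < q) (f : E3 × E3 → ℝ) (hf : Measurable f)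
    (hd : ∀ v : E3, ContDiff ℝ 1 (fun x : E3 => f (x, v)))
    (hDle : ∀ (y v : E3), ‖fderiv ℝ (fun z : E3 => f (z, v)) y‖ ≤ Nd * (1 + ‖v‖) ^ (-q))
    (hInt : ∀ y : E3, Integrable (fun v => f (y, v)))
    (x : E3) :
    HasFDerivAt (fun y : E3 => ∫ v, f (y, v))
      (∫ v, fderiv ℝ (fun z : E3 => f (z, v)) x) x := by
  apply hasFDerivAt_integral_of_dominated_of_fderiv_le
    (F := fun (y : E3) (v : E3) => f (y, v))
    (F' := fun (y : E3) (v : E3) => fderiv ℝ (fun z : E3 => f (z, v)) y)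
    (bound := fun v : E3 => Nd * (1 + ‖v‖) ^ (-q)) (s := ball x 1) (ball_mem_nhds x one_pos)
  · exact Eventually.of_forall fun y => (hf.comp measurable_prodMk_left).aestronglyMeasurable
  · exact hInt x
  · exact (meas_fderiv_clm f hf hd x).aestronglyMeasurable
  · exact ae_of_all _ fun v y _ => hDle y v
  · exact (intK hq).const_mul Nd
  · exact ae_of_all _ fun v y _ => (((hd v).differentiable one_ne_zero) y).hasFDerivAt

lemma hasFDeriv_m (q Nd : ℝ) (hq : 3 < q - 1) (hNd0 : 0 ≤ Nd) (f : E3 × E3 → ℝ)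
    (hf : Measurable f)
    (hd : ∀ v : E3, ContDiff ℝ 1 (fun x : E3 => f (x, v)))
    (hDle : ∀ (y v : E3), ‖fderiv ℝ (fun z : E3 => f (z, v)) y‖ ≤ Nd * (1 + ‖v‖) ^ (-q))
    (hIntm : ∀ y : E3, Integrable (fun v => f (y, v) • v))
    (x : E3) :
    HasFDerivAt (fun y : E3 => ∫ v, f (y, v) • v)
      (∫ v, (fderiv ℝ (fun z : E3 => f (z, v)) x).smulRight v) x := by
  apply hasFDerivAt_integral_of_dominated_of_fderiv_le
    (F := fun (y : E3) (v : E3) => f (y, v) • v)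
    (F' := fun (y : E3) (v : E3) => (fderiv ℝ (fun z : E3 => f (z, v)) y).smulRight v)
    (bound := fun v : E3 => Nd * (1 + ‖v‖) ^ (-(q - 1))) (s := ball x 1) (ball_mem_nhds x one_pos)
  · exact Eventually.of_forall fun y =>
      ((hf.comp measurable_prodMk_left).smul measurable_id).aestronglyMeasurable
  · exact hIntm x
  · exact (meas_fderiv_smulRight f hf hd x).aestronglyMeasurable
  · refine ae_of_all _ fun v y _ => ?_
    have h1 : (0:ℝ) < 1 + ‖v‖ := by positivity
    rw [ContinuousLinearMap.norm_smulRight_apply]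
    calc ‖fderiv ℝ (fun z : E3 => f (z, v)) y‖ * ‖v‖
        ≤ (Nd * (1 + ‖v‖) ^ (-q)) * ((1 + ‖v‖) ^ (1:ℝ)) := by
          apply mul_le_mul (hDle y v) _ (norm_nonneg _) (by positivity)
          rw [rpow_one]; linarith [norm_nonneg v]
      _ = Nd * (1 + ‖v‖) ^ (-(q - 1)) := by
          rw [mul_assoc, mul_comm ((1 + ‖v‖) ^ (-q)), weight_mul h1]
  · exact (intK hq).const_mul Nd
  · exact ae_of_all _ fun v y _ =>
      ((((hd v).differentiable one_ne_zero) y).hasFDerivAt).smul_const v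

lemma hasFDeriv_S (q N Nd : ℝ) (hq : 3 < q - 2) (hN0 : 0 ≤ N) (hNd0 : 0 ≤ Nd)
    (f : E3 × E3 → ℝ) (hf : Measurable f) (hpos : ∀ z, 0 ≤ f z)
    (hd : ∀ v : E3, ContDiff ℝ 1 (fun x : E3 => f (x, v)))
    (hfle : ∀ (y v : E3), f (y, v) ≤ N * (1 + ‖v‖) ^ (-q))
    (hDle : ∀ (y v : E3), ‖fderiv ℝ (fun z : E3 => f (z, v)) y‖ ≤ Nd * (1 + ‖v‖) ^ (-q))
    (x : E3) :
    HasFDerivAt (fun y : E3 => ∫ v, ‖v‖ ^ 2 * f (y, v))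
      (∫ v, ‖v‖ ^ 2 • fderiv ℝ (fun z : E3 => f (z, v)) x) x := by
  have hsq : ∀ v : E3, (‖v‖:ℝ) ^ 2 ≤ (1 + ‖v‖) ^ ((2:ℝ)) := by
    intro v
    rw [show ((2:ℝ)) = ((2:ℕ):ℝ) by norm_num, rpow_natCast]
    exact pow_le_pow_left₀ (norm_nonneg v) (by linarith [norm_nonneg v]) 2
  have hw : ∀ v : E3, (1 + ‖v‖ : ℝ) ^ (2:ℝ) * ((1 + ‖v‖) ^ (-q)) = (1 + ‖v‖) ^ (-(q - 2)) :=
    fun v => weight_mul (by positivity) 2 q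
  apply hasFDerivAt_integral_of_dominated_of_fderiv_le
    (F := fun (y : E3) (v : E3) => ‖v‖ ^ 2 * f (y, v))
    (F' := fun (y : E3) (v : E3) => ‖v‖ ^ 2 • fderiv ℝ (fun z : E3 => f (z, v)) y)
    (bound := fun v : E3 => Nd * (1 + ‖v‖) ^ (-(q - 2))) (s := ball x 1) (ball_mem_nhds x one_pos)
  · exact Eventually.of_forall fun y =>
      (((measurable_norm.pow measurable_const)).mul
        (hf.comp measurable_prodMk_left)).aestronglyMeasurable
  · apply Integrable.mono' ((intK hq).const_mul N)
      ((((measurable_norm.pow measurable_const)).mul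
        (hf.comp measurable_prodMk_left)).aestronglyMeasurable)
    refine ae_of_all _ fun v => ?_
    simp only [Pi.mul_apply, Function.comp_apply]
    rw [Real.norm_eq_abs, abs_of_nonneg (mul_nonneg (by positivity) (hpos _))]
    calc ‖v‖ ^ 2 * f (x, v) ≤ ((1 + ‖v‖) ^ (2:ℝ)) * (N * (1 + ‖v‖) ^ (-q)) :=
          mul_le_mul (hsq v) (hfle x v) (hpos _) (by positivity)
      _ = N * (1 + ‖v‖) ^ (-(q - 2)) := by rw [← hw v]; ring
  · exact (((measurable_norm.pow measurable_const)).stronglyMeasurable.smul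
      (meas_fderiv_clm f hf hd x)).aestronglyMeasurable
  · refine ae_of_all _ fun v y _ => ?_
    rw [norm_smul (‖v‖ ^ 2) (fderiv ℝ (fun z : E3 => f (z, v)) y), Real.norm_eq_abs,
      abs_of_nonneg (by positivity : (0:ℝ) ≤ ‖v‖ ^ 2)]
    calc ‖v‖ ^ 2 * ‖fderiv ℝ (fun z : E3 => f (z, v)) y‖
        ≤ ((1 + ‖v‖) ^ (2:ℝ)) * (Nd * (1 + ‖v‖) ^ (-q)) :=
          mul_le_mul (hsq v) (hDle y v) (norm_nonneg _) (by positivity)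
      _ = Nd * (1 + ‖v‖) ^ (-(q - 2)) := by rw [← hw v]; ring
  · exact (intK hq).const_mul Nd
  · exact ae_of_all _ fun v y _ =>
      ((((hd v).differentiable one_ne_zero) y).hasFDerivAt).const_mul (‖v‖ ^ 2)

lemma smulRight_norm_le {q Nd : ℝ} (hNd0 : 0 ≤ Nd) (v : E3) (D : E3 →L[ℝ] ℝ)
    (hD : ‖D‖ ≤ Nd * (1 + ‖v‖) ^ (-q)) :
    ‖D.smulRight v‖ ≤ Nd * (1 + ‖v‖) ^ (-(q - 1)) := by
  have h1 : (0:ℝ) < 1 + ‖v‖ := by positivity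
  rw [ContinuousLinearMap.norm_smulRight_apply]
  calc ‖D‖ * ‖v‖ ≤ (Nd * (1 + ‖v‖) ^ (-q)) * ((1 + ‖v‖) ^ (1:ℝ)) := by
        apply mul_le_mul hD _ (norm_nonneg _) (by positivity)
        rw [rpow_one]; linarith [norm_nonneg v]
    _ = Nd * (1 + ‖v‖) ^ (-(q - 1)) := by
        rw [mul_assoc, mul_comm ((1 + ‖v‖) ^ (-q)), weight_mul h1]

lemma sq_smul_norm_le {q Nd : ℝ} (hNd0 : 0 ≤ Nd) (v : E3) (D : E3 →L[ℝ] ℝ)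
    (hD : ‖D‖ ≤ Nd * (1 + ‖v‖) ^ (-q)) :
    ‖(‖v‖ ^ 2 : ℝ) • D‖ ≤ Nd * (1 + ‖v‖) ^ (-(q - 2)) := by
  have h1 : (0:ℝ) < 1 + ‖v‖ := by positivity
  have hsq : (‖v‖:ℝ) ^ 2 ≤ (1 + ‖v‖) ^ ((2:ℝ)) := by
    rw [show ((2:ℝ)) = ((2:ℕ):ℝ) by norm_num, rpow_natCast]
    exact pow_le_pow_left₀ (norm_nonneg v) (by linarith [norm_nonneg v]) 2
  rw [norm_smul (‖v‖ ^ 2) D, Real.norm_eq_abs, abs_of_nonneg (by positivity : (0:ℝ) ≤ ‖v‖ ^ 2)]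
  calc ‖v‖ ^ 2 * ‖D‖ ≤ ((1 + ‖v‖) ^ (2:ℝ)) * (Nd * (1 + ‖v‖) ^ (-q)) :=
        mul_le_mul hsq hD (norm_nonneg _) (by positivity)
    _ = Nd * (1 + ‖v‖) ^ (-(q - 2)) := by rw [← weight_mul h1 2 q]; ring

lemma int_S (q N : ℝ) (hq : 3 < q - 2) (hN0 : 0 ≤ N) (f : E3 × E3 → ℝ) (hf : Measurable f)
    (hpos : ∀ z, 0 ≤ f z) (hfle : ∀ (y v : E3), f (y, v) ≤ N * (1 + ‖v‖) ^ (-q)) (y : E3) :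
    Integrable (fun v : E3 => ‖v‖ ^ 2 * f (y, v)) := by
  apply Integrable.mono' ((intK hq).const_mul N)
    ((((measurable_norm.pow measurable_const)).mul
      (hf.comp measurable_prodMk_left)).aestronglyMeasurable)
  refine ae_of_all _ fun v => ?_
  have h1 : (0:ℝ) < 1 + ‖v‖ := by positivity
  have hsq : (‖v‖:ℝ) ^ 2 ≤ (1 + ‖v‖) ^ ((2:ℝ)) := by
    rw [show ((2:ℝ)) = ((2:ℕ):ℝ) by norm_num, rpow_natCast]
    exact pow_le_pow_left₀ (norm_nonneg v) (by linarith [norm_nonneg v]) 2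
  simp only [Pi.mul_apply, Function.comp_apply]
  rw [Real.norm_eq_abs, abs_of_nonneg (mul_nonneg (by positivity) (hpos _))]
  calc ‖v‖ ^ 2 * f (y, v) ≤ ((1 + ‖v‖) ^ (2:ℝ)) * (N * (1 + ‖v‖) ^ (-q)) :=
        mul_le_mul hsq (hfle y v) (hpos _) (by positivity)
    _ = N * (1 + ‖v‖) ^ (-(q - 2)) := by rw [← weight_mul h1 2 q]; ring

/-- gradient bounds on the macroscopic fields: under the stated
hypotheses, |∇_x ρ_f| ≤ C‖∇_x f‖_q, |∇_x U_f| ≤ C‖∇_x f‖_q, and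
|∇_x T_f| ≤ C‖∇_x f‖_q, with C depending only on q, c₁, c₂. -/
theorem macro_field_gradient_bounds (q c₁ c₂ : ℝ) (hq : 5 < q)
    (hc₁ : 0 < c₁) (hc₂ : 0 < c₂) :
    ∃ C : ℝ, 0 < C ∧
      ∀ (f : E3 × E3 → ℝ),
        Measurable f → (∀ z, 0 ≤ f z) →
        (∀ v : E3, ContDiff ℝ 1 (fun x : E3 => f (x, v))) →
        ∀ N : ℝ, (∀ (x v : E3), (1 + ‖v‖) ^ q * f (x, v) ≤ N) →
        ∀ Nd : ℝ,
          (∀ (x v : E3), (1 + ‖v‖) ^ q * ‖fderiv ℝ (fun y : E3 => f (y, v)) x‖ ≤ Nd) →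
        ∀ (ρf : E3 → ℝ) (Uf : E3 → E3) (Tf : E3 → ℝ),
          (∀ x, Integrable (fun v => f (x, v))) →
          (∀ x, ρf x = ∫ v, f (x, v)) →
          (∀ x, Integrable (fun v => f (x, v) • v)) →
          (∀ x, Uf x = (ρf x)⁻¹ • ∫ v, f (x, v) • v) →
          (∀ x, Integrable (fun v => ‖v - Uf x‖ ^ 2 * f (x, v))) →
          (∀ x, Tf x = (3 * ρf x)⁻¹ * ∫ v, ‖v - Uf x‖ ^ 2 * f (x, v)) →
          (∀ x, ρf x + ‖Uf x‖ + Tf x < c₁) →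
          (∀ x, c₂ < ρf x) → (∀ x, c₂ < Tf x) →
          ∀ x : E3,
            ‖fderiv ℝ ρf x‖ ≤ C * Nd ∧
            ‖fderiv ℝ Uf x‖ ≤ C * Nd ∧
            ‖fderiv ℝ Tf x‖ ≤ C * Nd := by
  have hq3 : (3:ℝ) < q := by linarith
  have hq31 : (3:ℝ) < q - 1 := by linarith
  have hq32 : (3:ℝ) < q - 2 := by linarith
  set K0 := ∫ v : E3, ((1:ℝ) + ‖v‖) ^ (-q) with hK0def
  set K1 := ∫ v : E3, ((1:ℝ) + ‖v‖) ^ (-(q - 1)) with hK1def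
  set K2 := ∫ v : E3, ((1:ℝ) + ‖v‖) ^ (-(q - 2)) with hK2def
  have hK0n : 0 ≤ K0 := K_nonneg
  have hK1n : 0 ≤ K1 := K_nonneg
  have hK2n : 0 ≤ K2 := K_nonneg
  set CU := c₂⁻¹ * K1 + (c₂ ^ 2)⁻¹ * K0 * (c₁ * c₁) with hCUdef
  set CS := 3 * c₁ * c₁ + c₁ * (c₁ * c₁) with hCSdef
  set CT := (3 * c₂)⁻¹ * K2 + CS * (((3 * c₂) ^ 2)⁻¹ * (3 * K0)) + 3⁻¹ * (2 * (c₁ * CU))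
    with hCTdef
  have hCUn : 0 ≤ CU := by positivity
  have hCSn : 0 ≤ CS := by positivity
  have hCTn : 0 ≤ CT := by positivity
  refine ⟨K0 + CU + CT + 1, by positivity, ?_⟩
  intro f hmeas hpos hC1 N hN Nd hNd ρf Uf Tf hInt hρ hIntm hU hIntT hT hlt hρlb hTlb x
  -- basic positivity facts
  have hNd0 : 0 ≤ Nd := le_trans (mul_nonneg (by positivity) (norm_nonneg _)) (hNd x 0)
  have hN0 : 0 ≤ N := le_trans (mul_nonneg (by positivity) (hpos _)) (hN x 0)
  have hDle : ∀ (y v : E3), ‖fderiv ℝ (fun z : E3 => f (z, v)) y‖ ≤ Nd * (1 + ‖v‖) ^ (-q) := by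
    intro y v
    have hp : (0:ℝ) < (1 + ‖v‖) ^ q := rpow_pos_of_pos (by positivity) q
    rw [rpow_neg (by positivity), ← div_eq_mul_inv]
    exact (le_div_iff₀' hp).mpr (hNd y v)
  have hfle : ∀ (y v : E3), f (y, v) ≤ N * (1 + ‖v‖) ^ (-q) := by
    intro y v
    have hp : (0:ℝ) < (1 + ‖v‖) ^ q := rpow_pos_of_pos (by positivity) q
    rw [rpow_neg (by positivity), ← div_eq_mul_inv]
    exact (le_div_iff₀' hp).mpr (hN y v)
  have hρpos : ∀ y, 0 < ρf y := fun y => hc₂.trans (hρlb y)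
  have hρne : ∀ y, ρf y ≠ 0 := fun y => (hρpos y).ne'
  have hTpos : ∀ y, 0 < Tf y := fun y => hc₂.trans (hTlb y)
  have hρub : ρf x < c₁ := by
    have h1 := hlt x; have h2 := norm_nonneg (Uf x); have h3 := hTpos x; linarith
  have hUub : ‖Uf x‖ < c₁ := by
    have h1 := hlt x; have h2 := hρpos x; have h3 := hTpos x; linarith
  have hTub : Tf x < c₁ := by
    have h1 := hlt x; have h2 := norm_nonneg (Uf x); have h3 := hρpos x; linarith
  -- derivative of ρ
  have hρfun : ρf = fun y : E3 => ∫ v, f (y, v) := funext hρ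
  have hρd : HasFDerivAt ρf (∫ v, fderiv ℝ (fun z : E3 => f (z, v)) x) x := by
    rw [hρfun]; exact hasFDeriv_rho q Nd hq3 f hmeas hC1 hDle hInt x
  set Dρ := ∫ v, fderiv ℝ (fun z : E3 => f (z, v)) x with hDρdef
  have hDρle : ‖Dρ‖ ≤ Nd * K0 := by
    calc ‖Dρ‖ ≤ ∫ v : E3, Nd * (1 + ‖v‖) ^ (-q) :=
          norm_integral_le_of_norm_le ((intK hq3).const_mul Nd) (ae_of_all _ fun v => hDle x v)
      _ = Nd * K0 := integral_const_mul Nd _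
  -- derivative of m
  set m : E3 → E3 := fun y : E3 => ∫ v, f (y, v) • v with hmdef
  have hmd : HasFDerivAt m (∫ v, (fderiv ℝ (fun z : E3 => f (z, v)) x).smulRight v) x :=
    hasFDeriv_m q Nd hq31 hNd0 f hmeas hC1 hDle hIntm x
  set Dm := ∫ v, (fderiv ℝ (fun z : E3 => f (z, v)) x).smulRight v with hDmdef
  have hDmle : ‖Dm‖ ≤ Nd * K1 := by
    calc ‖Dm‖ ≤ ∫ v : E3, Nd * (1 + ‖v‖) ^ (-(q - 1)) :=
          norm_integral_le_of_norm_le ((intK hq31).const_mul Nd)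
            (ae_of_all _ fun v => smulRight_norm_le hNd0 v _ (hDle x v))
      _ = Nd * K1 := integral_const_mul Nd _
  -- derivative of S
  set Sf : E3 → ℝ := fun y : E3 => ∫ v, ‖v‖ ^ 2 * f (y, v) with hSdef
  have hSd : HasFDerivAt Sf (∫ v, ‖v‖ ^ 2 • fderiv ℝ (fun z : E3 => f (z, v)) x) x :=
    hasFDeriv_S q N Nd hq32 hN0 hNd0 f hmeas hpos hC1 hfle hDle x
  set DS := ∫ v, ‖v‖ ^ 2 • fderiv ℝ (fun z : E3 => f (z, v)) x with hDSdef
  have hDSle : ‖DS‖ ≤ Nd * K2 := by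
    calc ‖DS‖ ≤ ∫ v : E3, Nd * (1 + ‖v‖) ^ (-(q - 2)) :=
          norm_integral_le_of_norm_le ((intK hq32).const_mul Nd)
            (ae_of_all _ fun v => sq_smul_norm_le hNd0 v _ (hDle x v))
      _ = Nd * K2 := integral_const_mul Nd _
  -- derivative of U
  have hUfun : Uf = fun y : E3 => (ρf y)⁻¹ • m y := funext fun y => hU y
  set Dinv := (ContinuousLinearMap.smulRight (1 : ℝ →L[ℝ] ℝ) (-(ρf x ^ 2)⁻¹)).comp Dρ
    with hDinvdef
  have hinv : HasFDerivAt (fun y : E3 => (ρf y)⁻¹) Dinv x :=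
    (hasFDerivAt_inv (hρne x)).comp x hρd
  set DU := (ρf x)⁻¹ • Dm + Dinv.smulRight (m x) with hDUdef
  have hUd : HasFDerivAt Uf DU x := by
    rw [hUfun]; exact hinv.smul hmd
  have hmx : m x = ρf x • Uf x := by
    rw [hU x, smul_inv_smul₀ (hρne x)]
  have hmxle : ‖m x‖ ≤ c₁ * c₁ := by
    rw [hmx, norm_smul, Real.norm_eq_abs, abs_of_pos (hρpos x)]
    exact mul_le_mul hρub.le hUub.le (norm_nonneg _) hc₁.le
  have hρinvle : (ρf x)⁻¹ ≤ c₂⁻¹ := inv_anti₀ hc₂ (hρlb x).le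
  have hρsqinvle : ((ρf x) ^ 2)⁻¹ ≤ (c₂ ^ 2)⁻¹ :=
    inv_anti₀ (by positivity) (pow_le_pow_left₀ hc₂.le (hρlb x).le 2)
  have hDinvle : ‖Dinv‖ ≤ (c₂ ^ 2)⁻¹ * (Nd * K0) := by
    calc ‖Dinv‖
        ≤ ‖ContinuousLinearMap.smulRight (1 : ℝ →L[ℝ] ℝ) (-(ρf x ^ 2)⁻¹)‖ * ‖Dρ‖ :=
          ContinuousLinearMap.opNorm_comp_le _ _
      _ = ((ρf x) ^ 2)⁻¹ * ‖Dρ‖ := by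
          rw [ContinuousLinearMap.norm_smulRight_apply, ContinuousLinearMap.one_def,
            ContinuousLinearMap.norm_id, one_mul, norm_neg, Real.norm_eq_abs,
            abs_of_pos (inv_pos.mpr (pow_pos (hρpos x) 2))]
      _ ≤ (c₂ ^ 2)⁻¹ * (Nd * K0) :=
          mul_le_mul hρsqinvle hDρle (norm_nonneg _) (by positivity)
  have hDUle : ‖DU‖ ≤ CU * Nd := by
    calc ‖DU‖ ≤ ‖(ρf x)⁻¹ • Dm‖ + ‖Dinv.smulRight (m x)‖ := norm_add_le _ _
      _ = (ρf x)⁻¹ * ‖Dm‖ + ‖Dinv‖ * ‖m x‖ := by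
          rw [norm_smul ((ρf x)⁻¹) Dm, Real.norm_eq_abs, abs_of_pos (inv_pos.mpr (hρpos x)),
            ContinuousLinearMap.norm_smulRight_apply]
      _ ≤ c₂⁻¹ * (Nd * K1) + ((c₂ ^ 2)⁻¹ * (Nd * K0)) * (c₁ * c₁) := by
          refine add_le_add (mul_le_mul hρinvle hDmle (norm_nonneg _) (by positivity))
            (mul_le_mul hDinvle hmxle (norm_nonneg _) (by positivity))
      _ = CU * Nd := by rw [hCUdef]; ring
  -- expansion of the second-moment integral
  have hexp : ∀ y : E3, (∫ v, ‖v - Uf y‖ ^ 2 * f (y, v)) = Sf y - ρf y * ‖Uf y‖ ^ 2 := by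
    intro y
    have hI1 : Integrable (fun v : E3 => ‖v‖ ^ 2 * f (y, v)) :=
      int_S q N hq32 hN0 f hmeas hpos hfle y
    have hI2 : Integrable (fun v : E3 => f (y, v) * ⟪Uf y, v⟫) := by
      refine ((innerSL ℝ (Uf y)).integrable_comp (hIntm y)).congr (ae_of_all _ fun v => ?_)
      simp only [innerSL_apply_apply, real_inner_smul_right]
    have hI3 : Integrable (fun v : E3 => ‖Uf y‖ ^ 2 * f (y, v)) := (hInt y).const_mul _
    have hI2' : Integrable (fun v : E3 => 2 * (f (y, v) * ⟪Uf y, v⟫)) := hI2.const_mul 2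
    have hI12 : Integrable
        (fun v : E3 => ‖v‖ ^ 2 * f (y, v) - 2 * (f (y, v) * ⟪Uf y, v⟫)) := hI1.sub hI2'
    have hpt : (fun v : E3 => ‖v - Uf y‖ ^ 2 * f (y, v))
        = fun v : E3 => (‖v‖ ^ 2 * f (y, v) - 2 * (f (y, v) * ⟪Uf y, v⟫))
            + ‖Uf y‖ ^ 2 * f (y, v) := by
      funext v
      rw [norm_sub_sq_real, real_inner_comm]
      ring
    have h2 : (∫ v, f (y, v) * ⟪Uf y, v⟫) = ρf y * ‖Uf y‖ ^ 2 := by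
      have hmy : (∫ v, f (y, v) • v) = ρf y • Uf y := by
        rw [show (∫ v, f (y, v) • v) = m y from rfl, hU y, smul_inv_smul₀ (hρne y)]
      have h := (innerSL ℝ (Uf y)).integral_comp_comm (hIntm y)
      simp only [innerSL_apply_apply, real_inner_smul_right] at h
      rw [h, hmy, real_inner_smul_right, real_inner_self_eq_norm_sq]
    calc (∫ v, ‖v - Uf y‖ ^ 2 * f (y, v))
        = ∫ v, ((‖v‖ ^ 2 * f (y, v) - 2 * (f (y, v) * ⟪Uf y, v⟫))
            + ‖Uf y‖ ^ 2 * f (y, v)) := by rw [hpt]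
      _ = (∫ v, (‖v‖ ^ 2 * f (y, v) - 2 * (f (y, v) * ⟪Uf y, v⟫)))
            + ∫ v, ‖Uf y‖ ^ 2 * f (y, v) := integral_add hI12 hI3
      _ = ((∫ v, ‖v‖ ^ 2 * f (y, v)) - 2 * (ρf y * ‖Uf y‖ ^ 2)) + ‖Uf y‖ ^ 2 * ρf y := by
          rw [integral_sub hI1 hI2', integral_const_mul 2, integral_const_mul (‖Uf y‖ ^ 2), h2,
            ← hρ y]
      _ = Sf y - ρf y * ‖Uf y‖ ^ 2 := by simp only [hSdef]; ring
  have hTfun : Tf = fun y : E3 => (3 * ρf y)⁻¹ * Sf y - 3⁻¹ * ‖Uf y‖ ^ 2 := by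
    funext y
    rw [hT y, hexp y]
    field_simp [hρne y]
  -- bound on Sf x
  have hSxval : Sf x = 3 * ρf x * Tf x + ρf x * ‖Uf x‖ ^ 2 := by
    have e1 : (∫ v, ‖v - Uf x‖ ^ 2 * f (x, v)) = 3 * ρf x * Tf x := by
      rw [hT x]; field_simp [hρne x]
    have e2 := hexp x
    rw [e1] at e2
    linarith
  have hSxle : |Sf x| ≤ CS := by
    have hs1 : 0 ≤ 3 * ρf x * Tf x :=
      mul_nonneg (mul_nonneg (by norm_num) (hρpos x).le) (hTpos x).le
    have hs2 : 0 ≤ ρf x * ‖Uf x‖ ^ 2 := mul_nonneg (hρpos x).le (sq_nonneg _)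
    rw [hSxval, abs_of_nonneg (by linarith)]
    have hA : 3 * ρf x * Tf x ≤ 3 * c₁ * c₁ :=
      mul_le_mul (by linarith) hTub.le (hTpos x).le (by positivity)
    have hsq' : ‖Uf x‖ ^ 2 ≤ c₁ * c₁ := by
      rw [sq]; exact mul_le_mul hUub.le hUub.le (norm_nonneg _) hc₁.le
    have hB : ρf x * ‖Uf x‖ ^ 2 ≤ c₁ * (c₁ * c₁) :=
      mul_le_mul hρub.le hsq' (sq_nonneg _) hc₁.le
    rw [hCSdef]
    linarith
  -- derivative of T
  have h3ρd : HasFDerivAt (fun y : E3 => 3 * ρf y) ((3:ℝ) • Dρ) x := hρd.const_mul 3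
  have h3ρpos : (0:ℝ) < 3 * ρf x := mul_pos (by norm_num) (hρpos x)
  have h3ne : (3:ℝ) * ρf x ≠ 0 := h3ρpos.ne'
  set Dinv3 := (ContinuousLinearMap.smulRight (1 : ℝ →L[ℝ] ℝ) (-((3 * ρf x) ^ 2)⁻¹)).comp
    ((3:ℝ) • Dρ) with hDinv3def
  have hinv3 : HasFDerivAt (fun y : E3 => (3 * ρf y)⁻¹) Dinv3 x :=
    (hasFDerivAt_inv h3ne).comp x h3ρd
  set D1 := (3 * ρf x)⁻¹ • DS + Sf x • Dinv3 with hD1def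
  have hmul : HasFDerivAt (fun y : E3 => (3 * ρf y)⁻¹ * Sf y) D1 x := hinv3.mul hSd
  set D2 := 2 • (innerSL ℝ (Uf x)).comp DU with hD2def
  have hns : HasFDerivAt (fun y : E3 => ‖Uf y‖ ^ 2) D2 x := hUd.norm_sq
  set DT := D1 - (3:ℝ)⁻¹ • D2 with hDTdef
  have hTd : HasFDerivAt Tf DT x := by
    rw [hTfun]
    exact hmul.sub (hns.const_mul (3:ℝ)⁻¹)
  -- norm bounds for T
  have h3ρinvle : (3 * ρf x)⁻¹ ≤ (3 * c₂)⁻¹ :=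
    inv_anti₀ (by positivity) (by linarith [(hρlb x).le])
  have h3ρsqinvle : ((3 * ρf x) ^ 2)⁻¹ ≤ ((3 * c₂) ^ 2)⁻¹ :=
    inv_anti₀ (by positivity)
      (pow_le_pow_left₀ (by positivity) (by linarith [(hρlb x).le]) 2)
  have hDinv3le : ‖Dinv3‖ ≤ ((3 * c₂) ^ 2)⁻¹ * (3 * (Nd * K0)) := by
    calc ‖Dinv3‖
        ≤ ‖ContinuousLinearMap.smulRight (1 : ℝ →L[ℝ] ℝ) (-((3 * ρf x) ^ 2)⁻¹)‖ * ‖(3:ℝ) • Dρ‖ :=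
          ContinuousLinearMap.opNorm_comp_le _ _
      _ = ((3 * ρf x) ^ 2)⁻¹ * (3 * ‖Dρ‖) := by
          rw [ContinuousLinearMap.norm_smulRight_apply, ContinuousLinearMap.one_def,
            ContinuousLinearMap.norm_id, one_mul, norm_neg, Real.norm_eq_abs,
            abs_of_pos (inv_pos.mpr (pow_pos h3ρpos 2)), norm_smul (3:ℝ) Dρ,
            Real.norm_eq_abs, abs_of_pos (by norm_num : (0:ℝ) < 3)]
      _ ≤ ((3 * c₂) ^ 2)⁻¹ * (3 * (Nd * K0)) := by
          refine mul_le_mul h3ρsqinvle (by linarith) (by positivity) (by positivity)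
  have hD2le : ‖D2‖ ≤ 2 * (c₁ * (CU * Nd)) := by
    have hcomp : ‖(innerSL ℝ (Uf x)).comp DU‖ ≤ c₁ * (CU * Nd) := by
      calc ‖(innerSL ℝ (Uf x)).comp DU‖ ≤ ‖innerSL ℝ (Uf x)‖ * ‖DU‖ :=
            ContinuousLinearMap.opNorm_comp_le _ _
        _ = ‖Uf x‖ * ‖DU‖ := by rw [innerSL_apply_norm]
        _ ≤ c₁ * (CU * Nd) := mul_le_mul hUub.le hDUle (norm_nonneg _) hc₁.le
    calc ‖D2‖ = ‖(innerSL ℝ (Uf x)).comp DU + (innerSL ℝ (Uf x)).comp DU‖ := by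
          rw [hD2def, two_smul]
      _ ≤ ‖(innerSL ℝ (Uf x)).comp DU‖ + ‖(innerSL ℝ (Uf x)).comp DU‖ := norm_add_le _ _
      _ ≤ 2 * (c₁ * (CU * Nd)) := by linarith
  have hDTle : ‖DT‖ ≤ CT * Nd := by
    calc ‖DT‖ ≤ ‖D1‖ + ‖(3:ℝ)⁻¹ • D2‖ := norm_sub_le _ _
      _ ≤ (‖(3 * ρf x)⁻¹ • DS‖ + ‖Sf x • Dinv3‖) + 3⁻¹ * ‖D2‖ := by
          refine add_le_add (norm_add_le _ _) ?_
          rw [norm_smul ((3:ℝ)⁻¹) D2, Real.norm_eq_abs, abs_of_pos (by norm_num : (0:ℝ) < 3⁻¹)]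
      _ = ((3 * ρf x)⁻¹ * ‖DS‖ + |Sf x| * ‖Dinv3‖) + 3⁻¹ * ‖D2‖ := by
          rw [norm_smul ((3 * ρf x)⁻¹) DS, Real.norm_eq_abs, abs_of_pos (inv_pos.mpr h3ρpos),
            norm_smul (Sf x) Dinv3, Real.norm_eq_abs]
      _ ≤ ((3 * c₂)⁻¹ * (Nd * K2) + CS * (((3 * c₂) ^ 2)⁻¹ * (3 * (Nd * K0))))
            + 3⁻¹ * (2 * (c₁ * (CU * Nd))) := by
          refine add_le_add (add_le_add
            (mul_le_mul h3ρinvle hDSle (norm_nonneg _) (by positivity))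
            (mul_le_mul hSxle hDinv3le (norm_nonneg _) hCSn))
            (mul_le_mul_of_nonneg_left hD2le (by norm_num))
      _ = CT * Nd := by rw [hCTdef]; ring
  -- conclusion
  have hCge : ∀ a : ℝ, a ≤ K0 + CU + CT → a * Nd ≤ (K0 + CU + CT + 1) * Nd := by
    intro a ha
    exact mul_le_mul_of_nonneg_right (by linarith) hNd0
  refine ⟨?_, ?_, ?_⟩
  · rw [hρd.fderiv]
    calc ‖Dρ‖ ≤ Nd * K0 := hDρle
      _ = K0 * Nd := by ring
      _ ≤ (K0 + CU + CT + 1) * Nd := hCge K0 (by linarith)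
  · rw [hUd.fderiv]
    calc ‖DU‖ ≤ CU * Nd := hDUle
      _ ≤ (K0 + CU + CT + 1) * Nd := hCge CU (by linarith)
  · rw [hTd.fderiv]
    calc ‖DT‖ ≤ CT * Nd := hDTle
      _ ≤ (K0 + CU + CT + 1) * Nd := hCge CT (by linarith)
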